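/- arXiv:1808.00229 — 10 statements merged into one kernel-verified Lean document; each statement's English description precedes it below -/
import Mathlib

section
/- The map V(x1,x2,x3) = (2*x2*x3, 2*x1*x3, (1-x3)^2 + x3^2) maps the 2-simplex into itself, and its only fixed points in the simplex are (1/4, 1/4, 1/2) and (0, 0, 1). -/
/-- V maps the 2-simplex into itself, and its only fixed points in the simplex
are (1/4,1/4,1/2) and (0,0,1). -/
theorem stmt_1
    (V : ℝ × ℝ × ℝ → ℝ × ℝ × ℝ)
    (hV : ∀ p : ℝ × ℝ × ℝ,
      V p = (2 * p.2.1 * p.2.2, 2 * p.1 * p.2.2, (1 - p.2.2)^2 + p.2.2^2))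
    (S : Set (ℝ × ℝ × ℝ))
    (hS : S = {p : ℝ × ℝ × ℝ | 0 ≤ p.1 ∧ 0 ≤ p.2.1 ∧ 0 ≤ p.2.2 ∧ p.1 + p.2.1 + p.2.2 = 1}) :
    (∀ p ∈ S, V p ∈ S) ∧
    {p ∈ S | V p = p} = {((1/4 : ℝ), (1/4 : ℝ), (1/2 : ℝ)), ((0 : ℝ), (0 : ℝ), (1 : ℝ))} := by
  subst hS
  constructor
  · rintro ⟨x, y, z⟩ ⟨hx, hy, hz, hsum⟩
    rw [hV]
    simp only [Set.mem_setOf_eq] at *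
    refine ⟨by positivity, by positivity, by positivity, by nlinarith⟩
  · ext ⟨x, y, z⟩
    simp only [Set.mem_setOf_eq, Set.mem_insert_iff, Set.mem_singleton_iff, hV,
      Prod.mk.injEq]
    constructor
    · rintro ⟨⟨hx, hy, hz, hsum⟩, h1, h2, h3⟩
      have hzz : z = 1/2 ∨ z = 1 := by
        rcases mul_eq_zero.mp (show (z - 1/2) * (z - 1) = 0 by nlinarith) with h | h
        · left; linarith
        · right; linarith
      rcases hzz with hz1 | hz1
      · left
        subst hz1
        constructor
        · linarith
        constructor
        · linarith
        · rfl
      · right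
        subst hz1
        refine ⟨by linarith, by linarith, rfl⟩
    · rintro (⟨h1, h2, h3⟩ | ⟨h1, h2, h3⟩) <;> subst h1 <;> subst h2 <;> subst h3 <;>
        norm_num
end

section
/- Let 0 ≤ e < 1/4 and φ(x) = (1-x)^2 + e*x^2. Then the numbers x̄ = (1 + √(1-4e))/(2(1+e)) and x̿ = (1 - √(1-4e))/(2(1+e)) satisfy φ(x̄) = x̿ and φ(x̿) = x̄, and x̄ ≠ x̿; i.e., {x̄, x̿} is a 2-periodic orbit of φ. -/
/-- For 0 ≤ e < 1/4, the points x̄ and x̿ form a genuine 2-periodic orbit of φ. -/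
theorem stmt_7 (e : ℝ) (he0 : 0 ≤ e) (he1 : e < 1/4)
    (φ : ℝ → ℝ) (hφ : ∀ x, φ x = (1 - x)^2 + e * x^2)
    (xb xbb : ℝ)
    (hxb : xb = (1 + Real.sqrt (1 - 4*e)) / (2 * (1 + e)))
    (hxbb : xbb = (1 - Real.sqrt (1 - 4*e)) / (2 * (1 + e))) :
    φ xb = xbb ∧ φ xbb = xb ∧ xb ≠ xbb := by
  set s := Real.sqrt (1 - 4*e) with hs
  have hpos : (0:ℝ) < 1 - 4*e := by linarith
  have hs2 : s^2 = 1 - 4*e := Real.sq_sqrt (by linarith)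
  have hspos : 0 < s := Real.sqrt_pos.mpr hpos
  have h1e : (1 + e) ≠ 0 := by positivity
  refine ⟨?_, ?_, ?_⟩
  · rw [hφ, hxb, hxbb]; field_simp; nlinarith [hs2, sq_nonneg s]
  · rw [hφ, hxb, hxbb]; field_simp; nlinarith [hs2, sq_nonneg s]
  · rw [hxb, hxbb]
    intro h
    have : (1:ℝ) + s = 1 - s := by
      field_simp at h
      linarith [h]
    linarith
end

section
/- Let 1/4 ≤ e < 1 and φ(x) = (1-x)^2 + e*x^2. Then every real solution x of φ(φ(x)) = x satisfies φ(x) = x; i.e., φ has no genuine 2-periodic points. -/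
/-- For 1/4 ≤ e < 1, every solution of φ(φ(x)) = x is a fixed point of φ. -/
theorem stmt_8 (e : ℝ) (he0 : 1/4 ≤ e) (he1 : e < 1)
    (φ : ℝ → ℝ) (hφ : ∀ x, φ x = (1 - x)^2 + e * x^2) :
    ∀ x : ℝ, φ (φ x) = x → φ x = x := by
  intro x h
  rw [hφ (φ x), hφ x] at h
  rw [hφ x]
  set a := 1 + e with ha
  have key : ((1 - x)^2 + e * x^2 - x) * (a^2 * x^2 - a * x + e) = 0 := by
    rw [ha]; linear_combination h
  rcases mul_eq_zero.mp key with h1 | h2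
  · linarith
  · have hq : (a * x - 1/2)^2 + (e - 1/4) = 0 := by linear_combination h2
    have he : e = 1/4 := by nlinarith [sq_nonneg (a * x - 1/2)]
    have hx : a * x = 1/2 := by nlinarith [sq_nonneg (a * x - 1/2)]
    have : x = 2/5 := by
      rw [ha, he] at hx; linarith
    subst this; rw [he]; ring
end

section
/- Let 1/4 < e < 1, φ(x) = (1-x)^2 + e*x^2, and x3* = (3 - √(5-4e))/(2(1+e)). Then |φ'(x3*)| = |1 - √(5-4e)| < 1; i.e., x3* is an attracting fixed point of φ. -/
/-- For 1/4 < e < 1, |φ'(x3*)| = |1 - √(5-4e)| < 1: x3* is attracting. -/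
theorem stmt_12 (e : ℝ) (he0 : 1/4 < e) (he1 : e < 1)
    (φ : ℝ → ℝ) (hφ : ∀ x, φ x = (1 - x)^2 + e * x^2)
    (x3s : ℝ) (hx3s : x3s = (3 - Real.sqrt (5 - 4*e)) / (2 * (1 + e))) :
    deriv φ x3s = -2 * (1 - x3s) + 2 * e * x3s ∧
    |deriv φ x3s| = |1 - Real.sqrt (5 - 4*e)| ∧
    |1 - Real.sqrt (5 - 4*e)| < 1 := by
  have hφ' : φ = fun x => (1 - x)^2 + e * x^2 := funext hφ
  have hd : deriv φ x3s = -2 * (1 - x3s) + 2 * e * x3s := by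
    rw [hφ']
    have : HasDerivAt (fun x : ℝ => (1 - x)^2 + e * x^2)
        (-2 * (1 - x3s) + 2 * e * x3s) x3s := by
      have h1 : HasDerivAt (fun x : ℝ => (1 - x)^2) (2 * (1 - x3s) * (-1)) x3s :=
        ((hasDerivAt_id x3s).const_sub 1).pow 2 |>.congr_deriv (by simp only [id_eq]; ring)
      have h2 : HasDerivAt (fun x : ℝ => e * x^2) (e * (2 * x3s)) x3s :=
        ((hasDerivAt_pow 2 x3s).const_mul e).congr_deriv (by ring)
      exact (h1.add h2).congr_deriv (by ring)
    exact this.deriv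
  have hs : Real.sqrt (5 - 4*e) < 2 := by
    have : (5 - 4*e) < 4 := by linarith
    calc Real.sqrt (5 - 4*e) < Real.sqrt 4 := by
          apply Real.sqrt_lt_sqrt (by linarith) this
      _ = 2 := by
          rw [show (4:ℝ) = 2^2 by norm_num, Real.sqrt_sq (by norm_num)]
  have hs1 : 1 < Real.sqrt (5 - 4*e) := by
    have : (1:ℝ) = Real.sqrt 1 := (Real.sqrt_one).symm
    rw [this]
    exact Real.sqrt_lt_sqrt (by norm_num) (by linarith)
  have hval : -2 * (1 - x3s) + 2 * e * x3s = 1 - Real.sqrt (5 - 4*e) := by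
    rw [hx3s]
    have hne : (2 * (1 + e)) ≠ 0 := by positivity
    field_simp
    ring
  refine ⟨hd, ?_, ?_⟩
  · rw [hd, hval]
  · rw [abs_lt]; constructor <;> linarith
end

section
/- Let 0 ≤ e < 1/4, φ(x) = (1-x)^2 + e*x^2, and x3* = (3 - √(5-4e))/(2(1+e)). Then |φ'(x3*)| = |1 - √(5-4e)| > 1; i.e., x3* is a repelling fixed point of φ. -/
/-- For 0 ≤ e < 1/4, |φ'(x3*)| = |1 - √(5-4e)| > 1: x3* is repelling. -/
theorem stmt_13 (e : ℝ) (he0 : 0 ≤ e) (he1 : e < 1/4)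
    (φ : ℝ → ℝ) (hφ : ∀ x, φ x = (1 - x)^2 + e * x^2)
    (x3s : ℝ) (hx3s : x3s = (3 - Real.sqrt (5 - 4*e)) / (2 * (1 + e))) :
    deriv φ x3s = -2 * (1 - x3s) + 2 * e * x3s ∧
    |deriv φ x3s| = |1 - Real.sqrt (5 - 4*e)| ∧
    1 < |1 - Real.sqrt (5 - 4*e)| := by
  have hfun : φ = fun x => (1 - x)^2 + e * x^2 := funext hφ
  have hd : deriv φ x3s = -2 * (1 - x3s) + 2 * e * x3s := by
    rw [hfun]
    have : HasDerivAt (fun x : ℝ => (1 - x)^2 + e * x^2)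
        (-2 * (1 - x3s) + 2 * e * x3s) x3s := by
      have h1 : HasDerivAt (fun x : ℝ => (1 - x)^2) (2 * (1 - x3s) * (-1)) x3s := by
        have := ((hasDerivAt_id x3s).const_sub 1).fun_pow 2
        simpa using this
      have h2 : HasDerivAt (fun x : ℝ => e * x^2) (e * (2 * x3s)) x3s := by
        have := ((hasDerivAt_id x3s).pow 2).const_mul e
        simpa using this
      have := h1.fun_add h2
      rw [show -2 * (1 - x3s) + 2 * e * x3s = 2 * (1 - x3s) * -1 + e * (2 * x3s) by ring]
      exact this
    exact this.deriv
  have hep : (0:ℝ) < 1 + e := by linarith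
  have hval : -2 * (1 - x3s) + 2 * e * x3s = 1 - Real.sqrt (5 - 4*e) := by
    rw [hx3s]
    field_simp
    ring
  have hgt : 2 < Real.sqrt (5 - 4*e) := by
    have : (2:ℝ) = Real.sqrt 4 := by
      rw [show (4:ℝ) = 2^2 by norm_num, Real.sqrt_sq]; norm_num
    rw [this]
    apply Real.sqrt_lt_sqrt (by norm_num)
    linarith
  refine ⟨hd, by rw [hd, hval], ?_⟩
  rw [abs_of_neg (by linarith)]
  linarith
end

section
/- Let 0 ≤ e < 1/4, g(x) = φ(φ(x)) where φ(x) = (1-x)^2 + e*x^2, and let x̄ = (1 + √(1-4e))/(2(1+e)). Then |g'(x̄)| < 1; i.e., the 2-periodic point x̄ is attracting for φ^2. -/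
/-- For 0 ≤ e < 1/4 and g = φ ∘ φ, the 2-periodic point x̄ satisfies |g'(x̄)| < 1. -/
theorem stmt_14 (e : ℝ) (he0 : 0 ≤ e) (he1 : e < 1/4)
    (φ : ℝ → ℝ) (hφ : ∀ x, φ x = (1 - x)^2 + e * x^2)
    (xb : ℝ) (hxb : xb = (1 + Real.sqrt (1 - 4*e)) / (2 * (1 + e))) :
    |deriv (φ ∘ φ) xb| < 1 := by
  have hφ' : φ = fun x => (1 - x)^2 + e * x^2 := funext hφ
  subst hφ'
  set s := Real.sqrt (1 - 4*e) with hs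
  have hs2 : s^2 = 1 - 4*e := Real.sq_sqrt (by linarith)
  have ha : (1:ℝ) + e ≠ 0 := by positivity
  have hderiv : ∀ x : ℝ, HasDerivAt (fun x => (1 - x)^2 + e * x^2)
      (2*(1+e)*x - 2) x := by
    intro x
    have h1 : HasDerivAt (fun x : ℝ => (1 - x)^2)
        (((2:ℕ) : ℝ) * (1 - x) ^ (2 - 1) * (-1)) x :=
      ((hasDerivAt_id x).const_sub 1).pow 2
    have h2 : HasDerivAt (fun x : ℝ => e * x^2)
        (e * (((2:ℕ) : ℝ) * x ^ (2 - 1))) x :=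
      (hasDerivAt_pow 2 x).const_mul e
    exact (h1.add h2).congr_deriv (by push_cast; ring)
  have key : (fun x => (1 - x)^2 + e * x^2) xb = (1 - s) / (2*(1+e)) := by
    simp only
    rw [hxb]
    field_simp
    nlinarith [hs2]
  have h := (hderiv ((fun x => (1 - x)^2 + e * x^2) xb)).comp xb (hderiv xb)
  rw [key] at h
  rw [h.deriv]
  have hval : (2*(1+e)*((1 - s)/(2*(1+e))) - 2) * (2*(1+e)*xb - 2) = 4*e := by
    rw [hxb]
    field_simp
    nlinarith [hs2]
  rw [hval, abs_of_nonneg (by linarith)]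
  linarith
end

section
/- Let e ∈ [0,1), c, d ≥ 0 with c + d + e = 1, and x3* = (3 - √(5-4e))/(2(1+e)). Define x1* = (3x3* - 1)(c + 2d·x3*)/(5 + e - 12·x3*) and x2* = 1 - x1* - x3*. Then (x1*, x2*, x3*) is a fixed point of the map V(x1,x2,x3) = (c·x3^2 + 2x2·x3, d·x3^2 + 2x1·x3, (1-x3)^2 + e·x3^2). -/
/-- The explicit point (x1*, x2*, x3*) is a fixed point of
V(x1,x2,x3) = (c x3^2 + 2 x2 x3, d x3^2 + 2 x1 x3, (1-x3)^2 + e x3^2). -/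
theorem stmt_15 (c d e : ℝ) (hc : 0 ≤ c) (hd : 0 ≤ d) (he0 : 0 ≤ e) (he1 : e < 1)
    (hsum : c + d + e = 1)
    (V : ℝ × ℝ × ℝ → ℝ × ℝ × ℝ)
    (hV : ∀ p : ℝ × ℝ × ℝ,
      V p = (c * p.2.2^2 + 2 * p.2.1 * p.2.2,
             d * p.2.2^2 + 2 * p.1 * p.2.2,
             (1 - p.2.2)^2 + e * p.2.2^2))
    (x3s x1s x2s : ℝ)
    (hx3s : x3s = (3 - Real.sqrt (5 - 4*e)) / (2 * (1 + e)))
    (hx1s : x1s = (3 * x3s - 1) * (c + 2 * d * x3s) / (5 + e - 12 * x3s))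
    (hx2s : x2s = 1 - x1s - x3s) :
    V (x1s, x2s, x3s) = (x1s, x2s, x3s) := by
  set s : ℝ := Real.sqrt (5 - 4*e) with hs
  have hs2 : s ^ 2 = 5 - 4*e := Real.sq_sqrt (by linarith)
  have hs0 : 0 ≤ s := Real.sqrt_nonneg _
  have hs1 : 1 < s := by nlinarith
  have hs3 : s < 3 := by nlinarith
  have he : (0:ℝ) < 1 + e := by linarith
  have hene : (1:ℝ) + e ≠ 0 := ne_of_gt he
  -- the quadratic equation satisfied by x3s
  have h3 : (1+e) * x3s^2 - 3 * x3s + 1 = 0 := by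
    rw [hx3s]
    field_simp
    linear_combination (1:ℝ) * hs2
  -- the denominator is positive
  have hfac : 16 * (1+e) * (5 + e - 12 * x3s) = (s-1) * (3-s)^2 * (s+7) := by
    rw [hx3s]
    field_simp
    ring_nf
    linear_combination (58 + 8*e - 2*s^2) * hs2
  have hDpos : 0 < 5 + e - 12 * x3s := by
    have h1 : 0 < (s-1) * (3-s)^2 * (s+7) :=
      mul_pos (mul_pos (by linarith) (pow_pos (by linarith) 2)) (by linarith)
    nlinarith [hfac]
  have hD : 5 + e - 12 * x3s ≠ 0 := ne_of_gt hDpos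
  have hx1D : x1s * (5 + e - 12 * x3s) = (3 * x3s - 1) * (c + 2 * d * x3s) := by
    rw [hx1s]; exact div_mul_cancel₀ _ hD
  have key1 : (c * x3s^2 + 2 * (1 - x1s - x3s) * x3s - x1s) * (5 + e - 12 * x3s) = 0 := by
    linear_combination (-(2*x3s+1)) * hx1D + (12*x3s - d - e + 1) * h3 +
      ((5+e-12*x3s) * x3s^2 - (3*x3s-1) * (2*x3s+1)) * hsum
  have key2 : (d * x3s^2 + 2 * x1s * x3s - (1 - x1s - x3s)) * (5 + e - 12 * x3s) = 0 := by
    linear_combination (2*x3s+1) * hx1D + (d-6) * h3 + (3*x3s-1) * (2*x3s+1) * hsum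
  have e1 : c * x3s^2 + 2 * x2s * x3s = x1s := by
    rw [hx2s]
    rcases mul_eq_zero.mp key1 with h | h
    · linarith
    · exact absurd h hD
  have e2 : d * x3s^2 + 2 * x1s * x3s = x2s := by
    rw [hx2s]
    rcases mul_eq_zero.mp key2 with h | h
    · linarith
    · exact absurd h hD
  have e3 : (1 - x3s)^2 + e * x3s^2 = x3s := by linear_combination h3
  rw [hV]
  simp only [Prod.mk.injEq]
  exact ⟨e1, e2, e3⟩
end

section
/- Let 0 ≤ e < 1 and x3* = (3 - √(5-4e))/(2(1+e)). Then the two eigenvalues λ± = e·x3* - 1 ± √(1 + 2(e-2)x3* + (4+e^2)(x3*)^2) of the Jacobian satisfy |λ+| < 1 and |λ-| > 1; in particular the expression under the square root is nonnegative. -/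
/-- For 0 ≤ e < 1, the eigenvalues λ± = e x3* - 1 ± √(1 + 2(e-2)x3* + (4+e²)(x3*)²)
satisfy |λ+| < 1 and |λ-| > 1, the radicand being nonnegative. -/
theorem stmt_16 (e : ℝ) (he0 : 0 ≤ e) (he1 : e < 1)
    (x3s : ℝ) (hx3s : x3s = (3 - Real.sqrt (5 - 4*e)) / (2 * (1 + e))) :
    0 ≤ 1 + 2 * (e - 2) * x3s + (4 + e^2) * x3s^2 ∧
    |e * x3s - 1 + Real.sqrt (1 + 2 * (e - 2) * x3s + (4 + e^2) * x3s^2)| < 1 ∧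
    1 < |e * x3s - 1 - Real.sqrt (1 + 2 * (e - 2) * x3s + (4 + e^2) * x3s^2)| := by
  set s := Real.sqrt (5 - 4*e) with hs
  have h5 : (0:ℝ) < 5 - 4*e := by linarith
  have hs2 : s^2 = 5 - 4*e := Real.sq_sqrt h5.le
  have hs0 : 0 ≤ s := Real.sqrt_nonneg _
  have hs1 : 1 < s := by nlinarith
  have hs5 : s^2 ≤ 5 := by nlinarith
  have h3s : (0:ℝ) < 3 + s := by linarith
  have h1e : (0:ℝ) < 2 * (1 + e) := by linarith
  have hx : x3s = 2 / (3 + s) := by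
    rw [hx3s, div_eq_div_iff h1e.ne' h3s.ne']
    nlinarith [hs2]
  set P : ℝ := s^4 - 4*s^3 - 18*s^2 + 12*s + 89 with hPdef
  have hP : 0 < P := by nlinarith [sq_nonneg (s-1), sq_nonneg (s-2), sq_nonneg (s^2-5)]
  have he : e = (5 - s^2)/4 := by linarith
  have hR : 1 + 2*(e-2)*x3s + (4+e^2)*x3s^2 = P / (2*(3+s))^2 := by
    rw [hx, he, hPdef]
    field_simp
    ring
  set q := Real.sqrt P with hq
  have hq0 : 0 ≤ q := Real.sqrt_nonneg _
  have hqpos : 0 < q := Real.sqrt_pos.mpr hP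
  have hq2 : q^2 = P := Real.sq_sqrt hP.le
  have hsq : Real.sqrt (1 + 2*(e-2)*x3s + (4+e^2)*x3s^2) = q / (2*(3+s)) := by
    rw [hR, Real.sqrt_div hP.le, Real.sqrt_sq (by positivity)]
  -- key bounds on q
  have hqlow : 5 - s^2 < q := by nlinarith
  have hqhigh : q < s^2 + 4*s + 7 := by nlinarith
  have hE : e * x3s - 1 = -((1+s)^2) / (2*(3+s)) := by
    rw [hx, he]
    field_simp
    ring
  refine ⟨by rw [hR]; positivity, ?_, ?_⟩
  · have h1 : e * x3s - 1 + Real.sqrt (1 + 2*(e-2)*x3s + (4+e^2)*x3s^2)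
        = (q - (1+s)^2) / (2*(3+s)) := by rw [hE, hsq]; ring
    have hsqr : (1+s)^2 = s^2 + 2*s + 1 := by ring
    rw [h1, abs_lt]
    constructor
    · rw [lt_div_iff₀ (by positivity : (0:ℝ) < 2*(3+s))]
      linarith
    · rw [div_lt_one (by positivity : (0:ℝ) < 2*(3+s))]
      linarith
  · have h1 : e * x3s - 1 - Real.sqrt (1 + 2*(e-2)*x3s + (4+e^2)*x3s^2)
        = -(((1+s)^2 + q) / (2*(3+s))) := by rw [hE, hsq]; ring
    rw [h1, abs_neg, lt_abs]
    left
    have hsqr : (1+s)^2 = s^2 + 2*s + 1 := by ring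
    rw [lt_div_iff₀ (by positivity : (0:ℝ) < 2*(3+s))]
    linarith
end

section
/- The map φ(x) = (1-x)^2 + e·x^2 with e ∈ [0,1] is topologically conjugate via an affine map h(x) = a·x + b (with a ≠ 0) to the logistic map ξ(x) = μ·x(1-x) with μ = 1 + √(5-4e); that is, there exist real a ≠ 0 and b such that h(φ(x)) = ξ(h(x)) for all real x. -/
/-- φ(x) = (1-x)^2 + e x^2 with e ∈ [0,1] is affinely conjugate to the logistic
map ξ(x) = μ x (1-x) with μ = 1 + √(5-4e). -/
theorem stmt_17 (e : ℝ) (he0 : 0 ≤ e) (he1 : e ≤ 1)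
    (φ : ℝ → ℝ) (hφ : ∀ x, φ x = (1 - x)^2 + e * x^2)
    (μ : ℝ) (hμ : μ = 1 + Real.sqrt (5 - 4*e))
    (ξ : ℝ → ℝ) (hξ : ∀ x, ξ x = μ * x * (1 - x)) :
    ∃ a b : ℝ, a ≠ 0 ∧ ∀ x : ℝ, a * φ x + b = ξ (a * x + b) := by
  have hs : Real.sqrt (5 - 4*e) ^ 2 = 5 - 4*e := Real.sq_sqrt (by linarith)
  have hs0 : 0 ≤ Real.sqrt (5 - 4*e) := Real.sqrt_nonneg _
  have hμ0 : μ ≠ 0 := by rw [hμ]; nlinarith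
  have he : (1 : ℝ) + e ≠ 0 := by linarith
  refine ⟨-(1+e)/μ, (μ+2)/(2*μ), ?_, ?_⟩
  · simp only [ne_eq, div_eq_zero_iff, neg_eq_zero, not_or]
    exact ⟨he, hμ0⟩
  · intro x
    rw [hφ, hξ]
    have hμ2 : μ^2 = 2*μ + 4 - 4*e := by
      rw [hμ]; linear_combination hs
    field_simp
    linear_combination (-1 : ℝ) * hμ2
end

section
/- For the map V(x1,x2,x3) = ((3/8)x2^2 + (5/8)x3^2 + 2x2x3, x1^2 + 2x1x3, (5/8)x2^2 + (3/8)x3^2 + 2x1x2), the point (1/3, 1/3, 1/3) is a fixed point, and the eigenvalues of its Jacobian (in coordinates (x1,x2) after eliminating x3 = 1 - x1 - x2) are λ = -7/8 ± (1/8)√(13/3)·i, which satisfy |λ| = √(5/6) < 1. -/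
lemma quad_deriv (a b c x : ℝ) : deriv (fun t => a*t^2 + b*t + c) x = 2*a*x + b := by
  have h : HasDerivAt (fun t : ℝ => a*t^2 + b*t + c) (a * (2 * x ^ 1) + b * 1) x :=
    (((hasDerivAt_pow 2 x).const_mul a).add ((hasDerivAt_id x).const_mul b)).add_const c
  rw [h.deriv]; ring

open Complex in
/-- For the example QSO, (1/3,1/3,1/3) is a fixed point and the eigenvalues of
the Jacobian of the reduced 2D map at (1/3,1/3) are -7/8 ± (1/8)√(13/3) i,
of modulus √(5/6) < 1. -/
theorem stmt_18
    (V : ℝ × ℝ × ℝ → ℝ × ℝ × ℝ)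
    (hV : ∀ p : ℝ × ℝ × ℝ,
      V p = ((3/8) * p.2.1^2 + (5/8) * p.2.2^2 + 2 * p.2.1 * p.2.2,
             p.1^2 + 2 * p.1 * p.2.2,
             (5/8) * p.2.1^2 + (3/8) * p.2.2^2 + 2 * p.1 * p.2.1))
    (F1 F2 : ℝ → ℝ → ℝ)
    (hF1 : ∀ x y, F1 x y = (3/8) * y^2 + (5/8) * (1 - x - y)^2 + 2 * y * (1 - x - y))
    (hF2 : ∀ x y, F2 x y = x^2 + 2 * x * (1 - x - y))
    (J : Matrix (Fin 2) (Fin 2) ℝ)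
    (hJ : J = !![deriv (fun x => F1 x (1/3)) (1/3), deriv (fun y => F1 (1/3) y) (1/3);
                 deriv (fun x => F2 x (1/3)) (1/3), deriv (fun y => F2 (1/3) y) (1/3)])
    (lp lm : ℂ)
    (hlp : lp = -7/8 + (1/8) * (Real.sqrt (13/3) : ℂ) * Complex.I)
    (hlm : lm = -7/8 - (1/8) * (Real.sqrt (13/3) : ℂ) * Complex.I) :
    V ((1/3 : ℝ), (1/3 : ℝ), (1/3 : ℝ)) = ((1/3 : ℝ), (1/3 : ℝ), (1/3 : ℝ)) ∧
    (J.map (fun r => (r : ℂ))).charpoly.eval lp = 0 ∧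
    (J.map (fun r => (r : ℂ))).charpoly.eval lm = 0 ∧
    ‖lp‖ = Real.sqrt (5/6) ∧ ‖lm‖ = Real.sqrt (5/6) ∧
    Real.sqrt (5/6) < 1 := by
  have h11 : deriv (fun x => F1 x (1/3)) (1/3) = -13/12 := by
    have he : (fun x => F1 x (1/3)) = fun x : ℝ => (5/8)*x^2 + (-3/2)*x + (55/72) := by
      funext x; rw [hF1]; ring
    rw [he, quad_deriv]; norm_num
  have h12 : deriv (fun y => F1 (1/3) y) (1/3) = -1/6 := by
    have he : (fun y => F1 (1/3) y) = fun y : ℝ => (-1)*y^2 + (1/2)*y + (5/18) := by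
      funext y; rw [hF1]; ring
    rw [he, quad_deriv]; norm_num
  have h21 : deriv (fun x => F2 x (1/3)) (1/3) = 2/3 := by
    have he : (fun x => F2 x (1/3)) = fun x : ℝ => (-1)*x^2 + (4/3)*x + 0 := by
      funext x; rw [hF2]; ring
    rw [he, quad_deriv]; norm_num
  have h22 : deriv (fun y => F2 (1/3) y) (1/3) = -2/3 := by
    have he : (fun y => F2 (1/3) y) = fun y : ℝ => (0:ℝ)*y^2 + (-2/3)*y + (5/9) := by
      funext y; rw [hF2]; ring
    rw [he, quad_deriv]; norm_num
  have hJ' : J = !![-13/12, -1/6; 2/3, -2/3] := by rw [hJ, h11, h12, h21, h22]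
  have hmap : J.map (fun r : ℝ => (r : ℂ)) = !![-13/12, -1/6; 2/3, -2/3] := by
    rw [hJ']
    ext i j
    fin_cases i <;> fin_cases j <;> simp [Matrix.map_apply]
  have hs : ((Real.sqrt (13/3) : ℝ) : ℂ) ^ 2 = (13/3 : ℂ) := by
    rw [← Complex.ofReal_pow, Real.sq_sqrt (by norm_num : (13:ℝ)/3 ≥ 0)]
    norm_num
  refine ⟨?_, ?_, ?_, ?_, ?_, ?_⟩
  · rw [hV]; norm_num
  · rw [hmap, Matrix.charpoly, Matrix.det_fin_two, hlp]
    simp only [show ((0:Fin 2) ≠ 1) from by decide, show ((1:Fin 2) ≠ 0) from by decide,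
      Matrix.charmatrix_apply_eq, Matrix.charmatrix_apply_ne, ne_eq, not_false_iff, Matrix.of_apply,
      Matrix.cons_val', Matrix.cons_val_zero, Matrix.cons_val_one, Matrix.head_cons,
      Matrix.head_fin_const, Matrix.empty_val', Matrix.cons_val_fin_one,
      Polynomial.eval_add, Polynomial.eval_sub, Polynomial.eval_mul, Polynomial.eval_neg,
      Polynomial.eval_pow, Polynomial.eval_X, Polynomial.eval_C]
    linear_combination (Complex.I^2/64) * hs + (13/192 : ℂ) * Complex.I_sq
  · rw [hmap, Matrix.charpoly, Matrix.det_fin_two, hlm]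
    simp only [show ((0:Fin 2) ≠ 1) from by decide, show ((1:Fin 2) ≠ 0) from by decide,
      Matrix.charmatrix_apply_eq, Matrix.charmatrix_apply_ne, ne_eq, not_false_iff, Matrix.of_apply,
      Matrix.cons_val', Matrix.cons_val_zero, Matrix.cons_val_one, Matrix.head_cons,
      Matrix.head_fin_const, Matrix.empty_val', Matrix.cons_val_fin_one,
      Polynomial.eval_add, Polynomial.eval_sub, Polynomial.eval_mul, Polynomial.eval_neg,
      Polynomial.eval_pow, Polynomial.eval_X, Polynomial.eval_C]
    linear_combination (Complex.I^2/64) * hs + (13/192 : ℂ) * Complex.I_sq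
  · have h : lp = ((-7/8 : ℝ) : ℂ) + ((Real.sqrt (13/3) / 8 : ℝ) : ℂ) * Complex.I := by
      rw [hlp]; push_cast; ring
    rw [h, Complex.norm_def, Complex.normSq_add_mul_I]
    congr 1
    have h2 := Real.sq_sqrt (show (0:ℝ) ≤ 13/3 by norm_num)
    nlinarith [h2]
  · have h : lm = ((-7/8 : ℝ) : ℂ) + ((-(Real.sqrt (13/3)) / 8 : ℝ) : ℂ) * Complex.I := by
      rw [hlm]; push_cast; ring
    rw [h, Complex.norm_def, Complex.normSq_add_mul_I]
    congr 1
    have h2 := Real.sq_sqrt (show (0:ℝ) ≤ 13/3 by norm_num)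
    nlinarith [h2]
  · rw [show (1:ℝ) = Real.sqrt 1 by simp]
    exact Real.sqrt_lt_sqrt (by norm_num) (by norm_num)
end
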